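/- (Local stability of the algorithm for K = 2.) Let g > 0, w* ∈ (0,1), and let f : ℝ → ℝ be differentiable at 0 with f(0) = 1, f(x) > 0 for all x, and 0 < f'(0) < 2 / (w*(1 − w*) g). Let u : ℝ → ℝ be differentiable at w* with u'(w*) = g, set γ₁(w) = (w − 1)(u(w) − u(w*)), γ₂(w) = w(u(w) − u(w*)), and T(w) = w f(γ₁(w)) / (w f(γ₁(w)) + (1 − w) f(γ₂(w))). Then |T'(w*)| < 1; consequently there exists δ > 0 such that for all w with 0 < |w − w*| < δ, |T(w) − w*| < |w − w*|, i.e. w* is a locally attracting fixed point of the update map. -/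

import Mathlib

/-- Local stability of the `K = 2` geometrical projection algorithm: if
`0 < f'(0) < 2 / (w*(1 − w*) g)`, then the one-step update map `T` satisfies
`|T'(w*)| < 1`, and consequently `w*` is a locally attracting fixed point:
there is `δ > 0` such that `|T(w) − w*| < |w − w*|` whenever `0 < |w − w*| < δ`. -/
theorem stmt7 (g wstar : ℝ) (hg : 0 < g) (hw : wstar ∈ Set.Ioo (0 : ℝ) 1)
    (f : ℝ → ℝ) (hf0 : f 0 = 1) (hfpos : ∀ x, 0 < f x)
    (hf : HasDerivAt f (deriv f 0) 0)
    (hf'pos : 0 < deriv f 0)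
    (hf'lt : deriv f 0 < 2 / (wstar * (1 - wstar) * g))
    (u : ℝ → ℝ) (hu : HasDerivAt u g wstar)
    (γ₁ γ₂ T : ℝ → ℝ)
    (hγ₁ : γ₁ = fun w => (w - 1) * (u w - u wstar))
    (hγ₂ : γ₂ = fun w => w * (u w - u wstar))
    (hT : T = fun w => w * f (γ₁ w) / (w * f (γ₁ w) + (1 - w) * f (γ₂ w))) :
    |deriv T wstar| < 1 ∧
    ∃ δ > 0, ∀ w : ℝ, 0 < |w - wstar| → |w - wstar| < δ →
      |T w - wstar| < |w - wstar| := by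
  obtain ⟨hw0, hw1⟩ := hw
  set a := deriv f 0 with ha
  set c : ℝ := wstar * (1 - wstar) * g * a with hc
  have hγ₁0 : γ₁ wstar = 0 := by simp [hγ₁]
  have hγ₂0 : γ₂ wstar = 0 := by simp [hγ₂]
  have hTfix : T wstar = wstar := by
    have h1 : (0:ℝ) < 1 - wstar := by linarith
    rw [hT]; simp only [hγ₁0, hγ₂0, hf0]
    field_simp
    ring
  have hdu : HasDerivAt (fun w => u w - u wstar) g wstar := hu.sub_const _
  have hdγ₁ : HasDerivAt γ₁ ((wstar - 1) * g) wstar := by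
    rw [hγ₁]
    have := ((hasDerivAt_id wstar).sub_const 1).fun_mul hdu
    simpa using this
  have hdγ₂ : HasDerivAt γ₂ (wstar * g) wstar := by
    rw [hγ₂]
    have := (hasDerivAt_id wstar).fun_mul hdu
    simpa using this
  have hfγ₁ : HasDerivAt (fun w => f (γ₁ w)) (a * ((wstar - 1) * g)) wstar := by
    have h0 : HasDerivAt f a (γ₁ wstar) := by rw [hγ₁0]; exact hf
    exact h0.comp wstar hdγ₁
  have hfγ₂ : HasDerivAt (fun w => f (γ₂ w)) (a * (wstar * g)) wstar := by
    have h0 : HasDerivAt f a (γ₂ wstar) := by rw [hγ₂0]; exact hf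
    exact h0.comp wstar hdγ₂
  have hN : HasDerivAt (fun w => w * f (γ₁ w)) (1 - c) wstar := by
    have := (hasDerivAt_id wstar).fun_mul hfγ₁
    refine this.congr_deriv ?_
    simp only [id_eq, hγ₁0, hf0, hc]; ring
  have hM : HasDerivAt (fun w => (1 - w) * f (γ₂ w)) (c - 1) wstar := by
    have := ((hasDerivAt_const wstar (1:ℝ)).fun_sub (hasDerivAt_id wstar)).fun_mul hfγ₂
    refine this.congr_deriv ?_
    simp only [id_eq, hγ₂0, hf0, hc]; ring
  have hDval : wstar * f (γ₁ wstar) + (1 - wstar) * f (γ₂ wstar) = 1 := by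
    rw [hγ₁0, hγ₂0, hf0]; ring
  have hT' : HasDerivAt T (1 - c) wstar := by
    rw [hT]
    have hne : wstar * f (γ₁ wstar) + (1 - wstar) * f (γ₂ wstar) ≠ 0 := by
      rw [hDval]; norm_num
    have := hN.fun_div (hN.fun_add hM) hne
    refine this.congr_deriv ?_
    rw [hDval, hγ₁0, hf0]
    ring
  have hderiv : deriv T wstar = 1 - c := hT'.deriv
  have hcpos : 0 < c := by
    have : 0 < 1 - wstar := by linarith
    positivity
  have hclt : c < 2 := by
    have hP : 0 < wstar * (1 - wstar) * g := by
      have : 0 < 1 - wstar := by linarith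
      positivity
    rw [lt_div_iff₀ hP] at hf'lt
    calc c = a * (wstar * (1 - wstar) * g) := by rw [hc]; ring
    _ < 2 := hf'lt
  have habs : |deriv T wstar| < 1 := by
    rw [hderiv, abs_lt]; constructor <;> linarith
  refine ⟨habs, ?_⟩
  have hslope : Filter.Tendsto (slope T wstar) (nhdsWithin wstar {wstar}ᶜ) (nhds (1 - c)) :=
    hasDerivAt_iff_tendsto_slope.mp hT'
  have habs' : |1 - c| < 1 := by rw [abs_lt]; constructor <;> linarith
  have hev : ∀ᶠ w in nhdsWithin wstar {wstar}ᶜ, |slope T wstar w| < 1 :=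
    (hslope.abs).eventually_lt_const habs'
  obtain ⟨δ, hδ, hδ'⟩ := Metric.mem_nhdsWithin_iff.mp hev
  refine ⟨δ, hδ, fun w hw1' hw2 => ?_⟩
  have hwne : w ≠ wstar := by
    intro h; rw [h] at hw1'; simp at hw1'
  have hdist : w ∈ Metric.ball wstar δ := by
    rw [Metric.mem_ball, Real.dist_eq]; exact hw2
  have hsl : |slope T wstar w| < 1 :=
    hδ' ⟨hdist, Set.mem_compl_singleton_iff.mpr hwne⟩
  have hsub : w - wstar ≠ 0 := sub_ne_zero.mpr hwne
  have heq : T w - wstar = slope T wstar w * (w - wstar) := by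
    rw [slope_def_field, div_mul_cancel₀ _ hsub, hTfix]
  rw [heq, abs_mul]
  calc |slope T wstar w| * |w - wstar| < 1 * |w - wstar| := by
        exact mul_lt_mul_of_pos_right hsl hw1'
    _ = |w - wstar| := one_mul _
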